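/- Fix a > 0 and define φ_a^+(x) = I_0(2√(a(a−x))) + ∂/∂x I_0(2√(a(a−x))) (interpreted via the entire power series in x). Then φ_a^+ solves the integral equation φ_a^+(x) + ∫_0^a J_0(2√(xy)) φ_a^+(y) dy = J_0(2√(ax)) for all x. -/

import Mathlib

set_option maxHeartbeats 1000000

open MeasureTheory

/-- `J0c u = J₀(2√u) = ∑ (-1)ⁿ uⁿ/(n!)²` (entire). -/
noncomputable def J0c (u : ℂ) : ℂ := ∑' n : ℕ, (-1)^n * u^n / ((Nat.factorial n : ℂ))^2

/-- `I0c u = I₀(2√u) = ∑ uⁿ/(n!)²` (entire). -/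
noncomputable def I0c (u : ℂ) : ℂ := ∑' n : ℕ, u^n / ((Nat.factorial n : ℂ))^2

/-- `φₐ⁺(x) = I₀(2√(a(a−x))) + ∂/∂x I₀(2√(a(a−x)))`. -/
noncomputable def phiPlus (a : ℝ) (x : ℂ) : ℂ :=
  I0c ((a : ℂ) * ((a : ℂ) - x)) + deriv (fun z : ℂ => I0c ((a : ℂ) * ((a : ℂ) - z))) x

noncomputable section PhiAux

/-! ### Coefficient sequences and basic bounds -/

def cI (n : ℕ) : ℂ := (((n.factorial : ℂ))^2)⁻¹
def cJ (n : ℕ) : ℂ := (-1)^n * (((n.factorial : ℂ))^2)⁻¹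
def cD (n : ℕ) : ℂ := ((n.factorial : ℂ) * ((n+1).factorial : ℂ))⁻¹

lemma fact_ne (n : ℕ) : ((n.factorial : ℂ)) ≠ 0 := by
  exact_mod_cast n.factorial_ne_zero

lemma norm_nat_inv_le {k n : ℕ} (h : n.factorial ≤ k) :
    ‖((k:ℂ))⁻¹‖ ≤ ((n.factorial : ℝ))⁻¹ := by
  rw [norm_inv, Complex.norm_natCast]
  apply inv_anti₀ (by exact_mod_cast n.factorial_pos)
  exact_mod_cast h

lemma hcI (n : ℕ) : ‖cI n‖ ≤ ((n.factorial : ℝ))⁻¹ := by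
  have : ((n.factorial : ℂ))^2 = ((n.factorial^2 : ℕ) : ℂ) := by push_cast; ring
  rw [cI, this]
  apply norm_nat_inv_le (Nat.le_self_pow two_ne_zero _)

lemma hcJ (n : ℕ) : ‖cJ n‖ ≤ ((n.factorial : ℝ))⁻¹ := by
  rw [cJ, norm_mul, norm_pow, norm_neg, norm_one, one_pow, one_mul]
  exact hcI n

lemma hcD (n : ℕ) : ‖cD n‖ ≤ ((n.factorial : ℝ))⁻¹ := by
  have : (n.factorial : ℂ) * ((n+1).factorial : ℂ) = ((n.factorial * (n+1).factorial : ℕ) : ℂ) := by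
    push_cast; ring
  rw [cD, this]
  exact norm_nat_inv_le (Nat.le_mul_of_pos_right _ (n+1).factorial_pos)

/-! ### Summability and differentiability of the entire series -/

section Cser
variable {c : ℕ → ℂ}

lemma summable_norm_cser (hc : ∀ n, ‖c n‖ ≤ ((n.factorial:ℝ))⁻¹) (u : ℂ) :
    Summable (fun n => ‖c n * u ^ n‖) := by
  refine Summable.of_nonneg_of_le (fun n => norm_nonneg _) (fun n => ?_)
    (Real.summable_pow_div_factorial ‖u‖)
  rw [norm_mul, norm_pow, div_eq_mul_inv, mul_comm]
  gcongr
  exact hc n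

lemma summable_cser (hc : ∀ n, ‖c n‖ ≤ ((n.factorial:ℝ))⁻¹) (u : ℂ) :
    Summable (fun n => c n * u ^ n) :=
  (summable_norm_cser hc u).of_norm

lemma summable_shift (R : ℝ) :
    Summable (fun n : ℕ => R ^ (n-1) / (((n-1).factorial : ℝ))) := by
  rw [← summable_nat_add_iff 1]
  simpa using Real.summable_pow_div_factorial R

lemma deriv_term_bound (hc : ∀ n, ‖c n‖ ≤ ((n.factorial:ℝ))⁻¹) {y : ℂ} {R : ℝ}
    (hyR : ‖y‖ ≤ R) (n : ℕ) :
    ‖c n * (n * y ^ (n-1))‖ ≤ R ^ (n-1) / (((n-1).factorial : ℝ)) := by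
  rw [norm_mul, norm_mul, norm_pow, Complex.norm_natCast]
  match n with
  | 0 => simp
  | (m+1) =>
    simp only [Nat.add_sub_cancel]
    calc ‖c (m+1)‖ * ((m+1 : ℕ) * ‖y‖ ^ m)
        ≤ (((m+1).factorial : ℝ))⁻¹ * ((m+1 : ℕ) * R ^ m) := by
          gcongr
          exact hc _
        _ = R ^ m / (m.factorial : ℝ) := by
          rw [Nat.factorial_succ]
          push_cast
          rw [mul_inv]
          field_simp

lemma summable_deriv_terms (hc : ∀ n, ‖c n‖ ≤ ((n.factorial:ℝ))⁻¹) (w : ℂ) :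
    Summable (fun n => c n * (n * w ^ (n-1))) := by
  apply Summable.of_norm
  exact Summable.of_nonneg_of_le (fun _ => norm_nonneg _)
    (deriv_term_bound hc le_rfl) (summable_shift ‖w‖)

lemma hasDerivAt_cser (hc : ∀ n, ‖c n‖ ≤ ((n.factorial:ℝ))⁻¹) (z : ℂ) :
    HasDerivAt (fun w : ℂ => ∑' n, c n * w ^ n)
      (∑' n, c n * (n * z ^ (n - 1))) z := by
  set R : ℝ := ‖z‖ + 1 with hRdef
  refine hasDerivAt_tsum_of_isPreconnected
    (summable_shift R) Metric.isOpen_ball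
    (Convex.isPreconnected (convex_ball 0 R))
    (g := fun n w => c n * w ^ n)
    (g' := fun n w => c n * (n * w ^ (n-1)))
    (fun n y _ => (hasDerivAt_pow n y).const_mul (c n))
    (fun n y hy => deriv_term_bound hc (le_of_lt (mem_ball_zero_iff.mp hy)) n)
    ?_ (summable_cser hc z) ?_
  · exact mem_ball_zero_iff.mpr (by simp [hRdef])
  · exact mem_ball_zero_iff.mpr (by simp [hRdef])

lemma differentiable_cser (hc : ∀ n, ‖c n‖ ≤ ((n.factorial:ℝ))⁻¹) :
    Differentiable ℂ (fun w : ℂ => ∑' n, c n * w ^ n) :=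
  fun z => (hasDerivAt_cser hc z).differentiableAt

end Cser

/-! ### `I0c`, `J0c`, `Dser` as coefficient series -/

def Dser (u : ℂ) : ℂ := ∑' n, cD n * u^n

lemma I0c_eq (u : ℂ) : I0c u = ∑' n, cI n * u^n :=
  tsum_congr fun n => by rw [cI, div_eq_mul_inv, mul_comm]

lemma J0c_eq (u : ℂ) : J0c u = ∑' n, cJ n * u^n :=
  tsum_congr fun n => by rw [cJ, div_eq_mul_inv]; ring

lemma tsum_deriv_eq (w : ℂ) : ∑' n, cI n * (n * w^(n-1)) = Dser w := by
  rw [Summable.tsum_eq_zero_add (summable_deriv_terms hcI w)]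
  simp only [Nat.cast_zero, zero_mul, mul_zero, zero_add, Nat.add_sub_cancel]
  refine tsum_congr fun m => ?_
  have h : cI (m+1) * ((m+1 : ℕ) : ℂ) = cD m := by
    rw [cI, cD, Nat.factorial_succ]
    have h1 : ((m.factorial : ℂ)) ≠ 0 := fact_ne m
    have h2 : ((m:ℂ) + 1) ≠ 0 := Nat.cast_add_one_ne_zero m
    push_cast
    field_simp
  calc cI (m+1) * (((m+1:ℕ):ℂ) * w^m) = (cI (m+1) * ((m+1:ℕ):ℂ)) * w^m := by ring
    _ = cD m * w^m := by rw [h]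

lemma phiPlus_eq (a : ℝ) (x : ℂ) :
    phiPlus a x = I0c ((a:ℂ)*((a:ℂ)-x)) - (a:ℂ) * Dser ((a:ℂ)*((a:ℂ)-x)) := by
  have hinner : HasDerivAt (fun z : ℂ => (a:ℂ)*((a:ℂ)-z)) (-(a:ℂ)) x := by
    simpa using (((hasDerivAt_id x).const_sub (a:ℂ)).const_mul (a:ℂ))
  have hfun : (fun z : ℂ => I0c ((a:ℂ)*((a:ℂ)-z)))
      = (fun w : ℂ => ∑' n, cI n * w ^ n) ∘ (fun z : ℂ => (a:ℂ)*((a:ℂ)-z)) := by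
    funext z; simp [Function.comp, I0c_eq]
  have hcomp := (hasDerivAt_cser hcI ((a:ℂ)*((a:ℂ)-x))).comp x hinner
  rw [phiPlus, hfun]
  rw [HasDerivAt.deriv hcomp, tsum_deriv_eq, I0c_eq]
  ring


section Rearrange
variable {c : ℕ → ℂ}

/-- the generic double-series term -/
def Fb (c : ℕ → ℂ) (u v : ℂ) (p : ℕ × ℕ) : ℂ :=
  c (p.1+p.2) * (((p.1+p.2).choose p.1 : ℕ) : ℂ) * u^p.1 * v^p.2

lemma coeff_choose_bound (hc : ∀ n, ‖c n‖ ≤ ((n.factorial:ℝ))⁻¹) (n j : ℕ) :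
    ‖c (n+j) * (((n+j).choose n : ℕ) : ℂ)‖ ≤ ((n.factorial : ℝ) * j.factorial)⁻¹ := by
  rw [norm_mul, Complex.norm_natCast]
  have h2 : (((n+j).choose n : ℝ)) = ((n+j).factorial : ℝ) / (n.factorial * j.factorial) := by
    rw [eq_div_iff (by positivity), ← mul_assoc]
    have hnat := Nat.add_choose_mul_factorial_mul_factorial j n
    rw [Nat.add_comm j n, mul_right_comm] at hnat
    exact_mod_cast hnat
  calc ‖c (n+j)‖ * (((n+j).choose n : ℕ) : ℝ)
      ≤ (((n+j).factorial : ℝ))⁻¹ * (((n+j).factorial : ℝ) / (n.factorial * j.factorial)) :=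
        mul_le_mul (hc _) (le_of_eq h2) (by positivity) (by positivity)
      _ = ((n.factorial : ℝ) * j.factorial)⁻¹ := by
        have : ((n+j).factorial : ℝ) ≠ 0 := by positivity
        field_simp
  
lemma Fb_norm_le (hc : ∀ n, ‖c n‖ ≤ ((n.factorial:ℝ))⁻¹) (u v : ℂ) (p : ℕ × ℕ) :
    ‖Fb c u v p‖ ≤ (‖u‖^p.1 / p.1.factorial) * (‖v‖^p.2 / p.2.factorial) := by
  obtain ⟨n, j⟩ := p
  calc ‖Fb c u v (n, j)‖
      = ‖c (n+j) * (((n+j).choose n : ℕ) : ℂ)‖ * ‖u‖^n * ‖v‖^j := by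
        rw [Fb]; rw [norm_mul, norm_mul, norm_pow, norm_pow]
      _ ≤ ((n.factorial : ℝ) * j.factorial)⁻¹ * ‖u‖^n * ‖v‖^j := by
        gcongr
        exact coeff_choose_bound hc n j
      _ = (‖u‖^n / n.factorial) * (‖v‖^j / j.factorial) := by
        rw [mul_inv]
        ring

lemma summable_Fb (hc : ∀ n, ‖c n‖ ≤ ((n.factorial:ℝ))⁻¹) (u v : ℂ) :
    Summable (Fb c u v) := by
  apply Summable.of_norm
  exact Summable.of_nonneg_of_le (fun _ => norm_nonneg _) (Fb_norm_le hc u v)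
    ((Real.summable_pow_div_factorial ‖u‖).mul_of_nonneg
      (Real.summable_pow_div_factorial ‖v‖)
      (fun n => by positivity) (fun n => by positivity))

/-- antidiagonal sum equals binomial term -/
lemma antidiag_sum (m : ℕ) (u v : ℂ) :
    ∑ kl ∈ Finset.HasAntidiagonal.antidiagonal m, Fb c u v kl = c m * (u + v)^m := by
  rw [add_pow, Finset.mul_sum, Finset.Nat.sum_antidiagonal_eq_sum_range_succ (fun k l => Fb c u v (k, l)) m]
  refine Finset.sum_congr rfl fun k hk => ?_
  have hkm : k ≤ m := Nat.lt_succ_iff.mp (Finset.mem_range.mp hk)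
  rw [Fb]
  simp only
  rw [Nat.add_sub_cancel' hkm]
  ring

/-- rearrangement along antidiagonals -/
lemma tsum_Fb_eq_cser (hc : ∀ n, ‖c n‖ ≤ ((n.factorial:ℝ))⁻¹) (u v : ℂ) :
    ∑' p : ℕ × ℕ, Fb c u v p = ∑' m, c m * (u + v)^m := by
  have step : ∑' p : ℕ × ℕ, Fb c u v p
      = ∑' m, ∑ kl ∈ Finset.HasAntidiagonal.antidiagonal m, Fb c u v kl := by
    conv_rhs => congr; ext; rw [← Finset.sum_finset_coe, ← tsum_fintype (L := SummationFilter.unconditional _)]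
    rw [← Finset.HasAntidiagonal.sigmaAntidiagonalEquivProd.tsum_eq (Fb c u v)]
    exact Summable.tsum_sigma' (fun n => (hasSum_fintype _).summable)
      (Finset.HasAntidiagonal.sigmaAntidiagonalEquivProd.summable_iff.mpr (summable_Fb hc u v))
  rw [step]
  exact tsum_congr fun m => antidiag_sum m u v

lemma cser_binom (hc : ∀ n, ‖c n‖ ≤ ((n.factorial:ℝ))⁻¹) (u v : ℂ) :
    ∑' m, c m * (u + v)^m = ∑' n : ℕ, ∑' j : ℕ, Fb c u v (n, j) :=
  by rw [← tsum_Fb_eq_cser hc u v, Summable.tsum_prod (summable_Fb hc u v)]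

end Rearrange

/-! ### The `B` coefficients -/

def Bc (a : ℝ) (n : ℕ) : ℂ :=
  ∑' j : ℕ, (a:ℂ)^(2*j+n) / ((j.factorial : ℂ) * ((j+n).factorial : ℂ))

lemma norm_Bc_term (a : ℝ) (n j : ℕ) :
    ‖(a:ℂ)^(2*j+n) / ((j.factorial : ℂ) * ((j+n).factorial : ℂ))‖
      = |a|^(2*j+n) / ((j.factorial : ℝ) * ((j+n).factorial : ℝ)) := by
  rw [norm_div, norm_pow, norm_mul, Complex.norm_real, Complex.norm_natCast,
    Complex.norm_natCast, Real.norm_eq_abs]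

lemma Bc_term_le (a : ℝ) (n j : ℕ) :
    |a|^(2*j+n) / ((j.factorial : ℝ) * ((j+n).factorial : ℝ))
      ≤ ((a^2)^j / (j.factorial : ℝ)) * (|a|^n / (n.factorial : ℝ)) := by
  have hfac : ((j.factorial : ℝ) * (n.factorial : ℝ)) ≤ ((j+n).factorial : ℝ) := by
    exact_mod_cast Nat.le_of_dvd (j+n).factorial_pos
      (Nat.factorial_mul_factorial_dvd_factorial_add j n)
  have hpow : |a|^(2*j+n) = (a^2)^j * |a|^n := by
    rw [pow_add, pow_mul, ← abs_pow]
    congr 2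
    rw [abs_of_nonneg (by positivity)]
  rw [hpow, div_le_iff₀ (by positivity)]
  have h2 : (n.factorial : ℝ) ≤ ((j+n).factorial : ℝ) := by
    exact_mod_cast Nat.factorial_le (Nat.le_add_left n j)
  have e : ((a^2)^j / (j.factorial : ℝ)) * (|a|^n / (n.factorial : ℝ))
      * ((j.factorial : ℝ) * ((j+n).factorial : ℝ))
      = (a^2)^j * |a|^n * (((j+n).factorial : ℝ) / (n.factorial : ℝ)) := by
    field_simp
  rw [e]
  calc (a^2)^j * |a|^n = (a^2)^j * |a|^n * 1 := (mul_one _).symm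
    _ ≤ (a^2)^j * |a|^n * (((j+n).factorial : ℝ) / (n.factorial : ℝ)) :=
      mul_le_mul_of_nonneg_left ((one_le_div (by positivity)).mpr h2) (by positivity)

lemma summable_Bc_norm (a : ℝ) (n : ℕ) :
    Summable (fun j => ‖(a:ℂ)^(2*j+n) / ((j.factorial : ℂ) * ((j+n).factorial : ℂ))‖) := by
  refine Summable.of_nonneg_of_le (fun _ => norm_nonneg _) (fun j => ?_)
    (((Real.summable_pow_div_factorial (a^2))).mul_right (|a|^n / (n.factorial : ℝ)))
  rw [norm_Bc_term]
  exact Bc_term_le a n j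

lemma summable_Bc (a : ℝ) (n : ℕ) :
    Summable (fun j => (a:ℂ)^(2*j+n) / ((j.factorial : ℂ) * ((j+n).factorial : ℂ))) :=
  (summable_Bc_norm a n).of_norm

lemma Bc_norm (a : ℝ) (n : ℕ) :
    ‖Bc a n‖ ≤ (∑' j : ℕ, (a^2)^j / (j.factorial : ℝ)) * (|a|^n / (n.factorial : ℝ)) := by
  refine le_trans (norm_tsum_le_tsum_norm (summable_Bc_norm a n)) ?_
  rw [← tsum_mul_right]
  refine Summable.tsum_le_tsum (fun j => ?_) (summable_Bc_norm a n)
    (((Real.summable_pow_div_factorial (a^2))).mul_right (|a|^n / (n.factorial : ℝ)))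
  rw [norm_Bc_term]
  exact Bc_term_le a n j

lemma Bc_norm' (a : ℝ) (n : ℕ) :
    ‖Bc a n‖ ≤ (∑' j : ℕ, (a^2)^j / (j.factorial : ℝ)) * |a|^n := by
  refine le_trans (Bc_norm a n) ?_
  have hE : 0 ≤ ∑' j : ℕ, (a^2)^j / (j.factorial : ℝ) :=
    tsum_nonneg fun j => by positivity
  refine mul_le_mul_of_nonneg_left ?_ hE
  exact div_le_self (by positivity)
    (by exact_mod_cast Nat.one_le_iff_ne_zero.mpr n.factorial_ne_zero)

lemma summable_xB (a : ℝ) (x : ℂ) (s : ℕ) :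
    Summable (fun n => (-1)^n * x^n / ((n.factorial : ℂ)) * Bc a (n+s)) := by
  set E := ∑' j : ℕ, (a^2)^j / (j.factorial : ℝ) with hEdef
  have hE : 0 ≤ E := tsum_nonneg fun j => by positivity
  apply Summable.of_norm
  refine Summable.of_nonneg_of_le (fun _ => norm_nonneg _) (fun n => ?_)
    (((Real.summable_pow_div_factorial (|a| * ‖x‖)).mul_left (E * |a|^s)))
  have h1 : ‖(-1:ℂ)^n * x^n / ((n.factorial : ℂ))‖ = ‖x‖^n / (n.factorial : ℝ) := by
    rw [norm_div, norm_mul, norm_pow, norm_pow, norm_neg, norm_one, one_pow, one_mul,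
      Complex.norm_natCast]
  rw [norm_mul, h1]
  calc ‖x‖^n / (n.factorial : ℝ) * ‖Bc a (n+s)‖
      ≤ ‖x‖^n / (n.factorial : ℝ) * (E * |a|^(n+s)) :=
        mul_le_mul_of_nonneg_left (Bc_norm' a (n+s)) (by positivity)
    _ = E * |a|^s * ((|a| * ‖x‖)^n / (n.factorial : ℝ)) := by
        rw [pow_add, mul_pow]
        ring

/-! ### Series representation of `phiPlus` in powers of `x` -/

lemma choose_cast_eq (n j : ℕ) :
    (((n+j).choose n : ℕ) : ℂ) = ((n+j).factorial : ℂ) / ((n.factorial:ℂ) * (j.factorial:ℂ)) := by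
  rw [eq_div_iff (by exact mul_ne_zero (fact_ne n) (fact_ne j)), ← mul_assoc]
  have hnat := Nat.add_choose_mul_factorial_mul_factorial j n
  rw [Nat.add_comm j n, mul_right_comm] at hnat
  exact_mod_cast hnat

lemma I0c_rep (a : ℝ) (x : ℂ) :
    I0c ((a:ℂ)*((a:ℂ)-x)) = ∑' n, (-1)^n * x^n / (n.factorial:ℂ) * Bc a n := by
  have hw : (a:ℂ)*((a:ℂ)-x) = (-((a:ℂ)*x)) + ((a:ℂ))^2 := by ring
  rw [I0c_eq, hw, cser_binom hcI (-((a:ℂ)*x)) ((a:ℂ)^2)]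
  refine tsum_congr fun n => ?_
  rw [Bc, ← tsum_mul_left]
  refine tsum_congr fun j => ?_
  show cI (n+j) * (((n+j).choose n : ℕ):ℂ) * (-((a:ℂ)*x))^n * (((a:ℂ))^2)^j
     = (-1)^n * x^n / (n.factorial:ℂ)
       * ((a:ℂ)^(2*j+n) / ((j.factorial : ℂ) * ((j+n).factorial : ℂ)))
  rw [choose_cast_eq, cI]
  rw [show (j+n) = (n+j) from Nat.add_comm j n]
  have h1 : ((n+j).factorial : ℂ) ≠ 0 := fact_ne _
  have h2 : ((n.factorial : ℂ)) ≠ 0 := fact_ne _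
  have h3 : ((j.factorial : ℂ)) ≠ 0 := fact_ne _
  have hp : ((a:ℂ))^(2*j+n) = (((a:ℂ))^2)^j * (a:ℂ)^n := by
    rw [← pow_mul, ← pow_add]
  rw [hp, neg_pow, mul_pow]
  field_simp

lemma Dser_rep (a : ℝ) (x : ℂ) :
    (a:ℂ) * Dser ((a:ℂ)*((a:ℂ)-x)) = ∑' n, (-1)^n * x^n / (n.factorial:ℂ) * Bc a (n+1) := by
  have hw : (a:ℂ)*((a:ℂ)-x) = (-((a:ℂ)*x)) + ((a:ℂ))^2 := by ring
  rw [show Dser ((a:ℂ)*((a:ℂ)-x)) = ∑' n : ℕ, ∑' j : ℕ, Fb cD (-((a:ℂ)*x)) (((a:ℂ))^2) (n, j)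
    from by rw [Dser, hw]; exact cser_binom hcD _ _]
  rw [← tsum_mul_left]
  refine tsum_congr fun n => ?_
  rw [Bc, ← tsum_mul_left, ← tsum_mul_left]
  refine tsum_congr fun j => ?_
  show (a:ℂ) * (cD (n+j) * (((n+j).choose n : ℕ):ℂ) * (-((a:ℂ)*x))^n * (((a:ℂ))^2)^j)
     = (-1)^n * x^n / (n.factorial:ℂ)
       * ((a:ℂ)^(2*j+(n+1)) / ((j.factorial : ℂ) * ((j+(n+1)).factorial : ℂ)))
  rw [choose_cast_eq, cD]
  rw [show (j+(n+1)) = (n+j+1) from by omega]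
  have h1 : ((n+j).factorial : ℂ) ≠ 0 := fact_ne _
  have h2 : ((n.factorial : ℂ)) ≠ 0 := fact_ne _
  have h3 : ((j.factorial : ℂ)) ≠ 0 := fact_ne _
  have h4 : (((n+j+1).factorial : ℂ)) ≠ 0 := fact_ne _
  have hp : ((a:ℂ))^(2*j+(n+1)) = (((a:ℂ))^2)^j * (a:ℂ)^n * (a:ℂ) := by
    rw [← pow_mul, ← pow_add, ← pow_succ]
    exact congrArg (fun k : ℕ => ((a:ℂ))^k) (by omega)
  rw [hp, neg_pow, mul_pow]
  field_simp

lemma phiPlus_rep (a : ℝ) (x : ℂ) :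
    phiPlus a x = ∑' n, (-1)^n * x^n / (n.factorial:ℂ) * (Bc a n - Bc a (n+1)) := by
  rw [phiPlus_eq, I0c_rep, Dser_rep]
  have h0 : Summable (fun n => (-1)^n * x^n / ((n.factorial : ℂ)) * Bc a n) := by
    simpa using summable_xB a x 0
  rw [← Summable.tsum_sub h0 (summable_xB a x 1)]
  refine tsum_congr fun n => ?_
  rw [mul_sub]

/-! ### Continuity -/

lemma continuous_I0c : Continuous I0c := by
  have : I0c = fun w : ℂ => ∑' n, cI n * w^n := funext I0c_eq
  rw [this]; exact (differentiable_cser hcI).continuous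

lemma continuous_J0c : Continuous J0c := by
  have : J0c = fun w : ℂ => ∑' n, cJ n * w^n := funext J0c_eq
  rw [this]; exact (differentiable_cser hcJ).continuous

lemma continuous_Dser : Continuous Dser := by
  have : Dser = fun w : ℂ => ∑' n, cD n * w^n := rfl
  rw [this]; exact (differentiable_cser hcD).continuous

lemma continuous_phi_r (a : ℝ) : Continuous (fun y : ℝ => phiPlus a (y:ℂ)) := by
  have h : (fun y : ℝ => phiPlus a (y:ℂ))
      = fun y : ℝ => I0c ((a:ℂ)*((a:ℂ)-(y:ℂ))) - (a:ℂ) * Dser ((a:ℂ)*((a:ℂ)-(y:ℂ))) :=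
    funext fun y => phiPlus_eq a (y:ℂ)
  rw [h]
  have hw : Continuous (fun y : ℝ => (a:ℂ)*((a:ℂ)-(y:ℂ))) := by continuity
  exact (continuous_I0c.comp hw).sub (continuous_const.mul (continuous_Dser.comp hw))

/-! ### The Beta integral for natural exponents -/

lemma beta_unit (n m : ℕ) :
    ∫ t in (0:ℝ)..1, (t:ℂ)^n * (1 - (t:ℂ))^m
      = (n.factorial:ℂ) * (m.factorial:ℂ) / ((n+m+1).factorial:ℂ) := by
  have hu : 0 < Complex.re ((n:ℂ)+1) := by
    simp only [Complex.add_re, Complex.natCast_re, Complex.one_re]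
    positivity
  have hv : 0 < Complex.re ((m:ℂ)+1) := by
    simp only [Complex.add_re, Complex.natCast_re, Complex.one_re]
    positivity
  have hB := Complex.Gamma_mul_Gamma_eq_betaIntegral hu hv
  have hbeta : Complex.betaIntegral ((n:ℂ)+1) ((m:ℂ)+1)
      = ∫ t in (0:ℝ)..1, (t:ℂ)^n * (1 - (t:ℂ))^m := by
    rw [Complex.betaIntegral]
    refine intervalIntegral.integral_congr fun t _ => ?_
    rw [add_sub_cancel_right, add_sub_cancel_right, Complex.cpow_natCast, Complex.cpow_natCast]
  have hGn : Complex.Gamma ((n:ℂ)+1) = (n.factorial:ℂ) := Complex.Gamma_nat_eq_factorial n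
  have hGm : Complex.Gamma ((m:ℂ)+1) = (m.factorial:ℂ) := Complex.Gamma_nat_eq_factorial m
  have hsum : ((n:ℂ)+1) + ((m:ℂ)+1) = (((n+m+1 : ℕ)):ℂ) + 1 := by push_cast; ring
  have hGnm : Complex.Gamma (((n:ℂ)+1) + ((m:ℂ)+1)) = (((n+m+1).factorial):ℂ) := by
    rw [hsum]; exact Complex.Gamma_nat_eq_factorial (n+m+1)
  rw [hGn, hGm, hGnm, hbeta] at hB
  rw [eq_div_iff (fact_ne (n+m+1)), mul_comm]
  exact hB.symm

lemma beta_nat {a : ℝ} (ha : 0 < a) (n m : ℕ) :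
    ∫ y in (0:ℝ)..a, (y:ℂ)^n * ((a:ℂ) - (y:ℂ))^m
      = (a:ℂ)^(n+m+1) * (n.factorial:ℂ) * (m.factorial:ℂ) / ((n+m+1).factorial:ℂ) := by
  have hscale := intervalIntegral.integral_comp_mul_left
    (f := fun y : ℝ => (y:ℂ)^n * ((a:ℂ) - (y:ℂ))^m) (a := (0:ℝ)) (b := (1:ℝ)) (c := a) ha.ne'
  rw [mul_zero, mul_one] at hscale
  have hlhs : ∫ t in (0:ℝ)..1, (((a*t:ℝ)):ℂ)^n * ((a:ℂ) - ((a*t:ℝ):ℂ))^m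
      = (a:ℂ)^(n+m) * ∫ t in (0:ℝ)..1, (t:ℂ)^n * (1 - (t:ℂ))^m := by
    rw [← intervalIntegral.integral_const_mul]
    refine intervalIntegral.integral_congr fun t _ => ?_
    show (((a*t:ℝ)):ℂ)^n * ((a:ℂ) - ((a*t:ℝ):ℂ))^m = (a:ℂ)^(n+m) * ((t:ℂ)^n * (1 - (t:ℂ))^m)
    push_cast
    rw [show ((a:ℂ) - (a:ℂ)*(t:ℂ)) = (a:ℂ)*(1-(t:ℂ)) from by ring, mul_pow, mul_pow, pow_add]
    ring
  rw [hlhs, beta_unit] at hscale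
  have key : ∫ y in (0:ℝ)..a, (y:ℂ)^n * ((a:ℂ) - (y:ℂ))^m
      = (a:ℝ) • ((a:ℂ)^(n+m) * ((n.factorial:ℂ) * (m.factorial:ℂ) / ((n+m+1).factorial:ℂ))) := by
    rw [hscale, smul_smul, mul_inv_cancel₀ ha.ne', one_smul]
  rw [key, Complex.real_smul, pow_add]
  ring

/-! ### Moments of `phiPlus` -/

lemma hcM (a : ℝ) (m : ℕ) : ‖cI m - (a:ℂ)*cD m‖ ≤ (1+|a|) / (m.factorial:ℝ) := by
  calc ‖cI m - (a:ℂ)*cD m‖ ≤ ‖cI m‖ + ‖(a:ℂ)*cD m‖ := norm_sub_le _ _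
    _ ≤ ((m.factorial:ℝ))⁻¹ + |a| * ((m.factorial:ℝ))⁻¹ := by
        rw [norm_mul, Complex.norm_real, Real.norm_eq_abs]
        gcongr
        · exact hcI m
        · exact hcD m
    _ = (1+|a|) / (m.factorial:ℝ) := by rw [div_eq_mul_inv]; ring

lemma phi_term_expand (a : ℝ) (n : ℕ) (y : ℝ) :
    (y:ℂ)^n * phiPlus a (y:ℂ)
      = ∑' m, (y:ℂ)^n * ((cI m - (a:ℂ)*cD m) * ((a:ℂ)*((a:ℂ)-(y:ℂ)))^m) := by
  rw [phiPlus_eq, I0c_eq]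
  rw [show (a:ℂ) * Dser ((a:ℂ)*((a:ℂ)-(y:ℂ)))
      = ∑' m, (a:ℂ) * (cD m * ((a:ℂ)*((a:ℂ)-(y:ℂ)))^m) from (tsum_mul_left).symm]
  rw [← Summable.tsum_sub (summable_cser hcI _) (Summable.mul_left _ (summable_cser hcD _))]
  rw [← tsum_mul_left]
  exact tsum_congr fun m => by ring

lemma int_norm_bound {a C : ℝ} (ha : 0 < a) {f : ℝ → ℂ} (hc : Continuous f)
    (hC : ∀ y ∈ Set.Ioc 0 a, ‖f y‖ ≤ C) :
    ∫ y in Set.Ioc 0 a, ‖f y‖ ≤ C * a := by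
  have h1 : ∫ y in Set.Ioc 0 a, ‖f y‖ ≤ ∫ _ in Set.Ioc 0 a, C := by
    refine setIntegral_mono_on (hc.norm.integrableOn_Ioc) ?_ measurableSet_Ioc hC
    exact integrableOn_const measure_Ioc_lt_top.ne
  rw [setIntegral_const, Real.volume_real_Ioc_of_le ha.le, sub_zero,
    smul_eq_mul, mul_comm] at h1
  exact h1

lemma moment {a : ℝ} (ha : 0 < a) (n : ℕ) :
    ∫ y in (0:ℝ)..a, (y:ℂ)^n * phiPlus a (y:ℂ)
      = (n.factorial:ℂ) * (Bc a (n+1) - Bc a n) + (a:ℂ)^n := by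
  set G : ℕ → ℝ → ℂ :=
    fun m y => (y:ℂ)^n * ((cI m - (a:ℂ)*cD m) * ((a:ℂ)*((a:ℂ)-(y:ℂ)))^m) with hG
  have hGcont : ∀ m, Continuous (G m) := by
    intro m
    apply Continuous.mul
    · exact (Complex.continuous_ofReal.pow n)
    · exact continuous_const.mul
        ((continuous_const.mul (continuous_const.sub Complex.continuous_ofReal)).pow m)
  have hGint : ∀ m, Integrable (G m) (volume.restrict (Set.Ioc 0 a)) :=
    fun m => (hGcont m).integrableOn_Ioc
  have hGbound : ∀ m, ∀ y ∈ Set.Ioc 0 a,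
      ‖G m y‖ ≤ a^n * ((1+|a|) / (m.factorial:ℝ)) * (a*a)^m := by
    intro m y hy
    obtain ⟨hy0, hya⟩ := hy
    have hy0' : (0:ℝ) ≤ y := hy0.le
    have hwy : ‖(a:ℂ)*((a:ℂ)-(y:ℂ))‖ ≤ a * a := by
      rw [norm_mul, show ((a:ℂ)-(y:ℂ)) = (((a-y:ℝ)):ℂ) from by push_cast; ring,
        Complex.norm_real, Complex.norm_real, Real.norm_eq_abs, Real.norm_eq_abs]
      have h1 : |a| = a := abs_of_pos ha
      have h2 : |a - y| ≤ a := by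
        rw [abs_of_nonneg (by linarith)]
        linarith
      rw [h1]
      exact mul_le_mul_of_nonneg_left h2 ha.le
    have hyn : ‖(y:ℂ)^n‖ ≤ a^n := by
      rw [norm_pow, Complex.norm_real, Real.norm_eq_abs, abs_of_nonneg hy0']
      exact pow_le_pow_left₀ hy0' hya n
    calc ‖G m y‖ = ‖(y:ℂ)^n‖ * (‖cI m - (a:ℂ)*cD m‖ * ‖((a:ℂ)*((a:ℂ)-(y:ℂ)))^m‖) := by
          rw [hG]; simp only [norm_mul]
      _ ≤ a^n * (((1+|a|) / (m.factorial:ℝ)) * (a*a)^m) := by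
          refine mul_le_mul hyn ?_ (by positivity) (by positivity)
          refine mul_le_mul (hcM a m) ?_ (norm_nonneg _) (by positivity)
          rw [norm_pow]
          exact pow_le_pow_left₀ (norm_nonneg _) hwy m
      _ = a^n * ((1+|a|) / (m.factorial:ℝ)) * (a*a)^m := by ring
  have hGsum : Summable (fun m => ∫ y in Set.Ioc 0 a, ‖G m y‖) := by
    refine Summable.of_nonneg_of_le
      (fun m => integral_nonneg (fun y => norm_nonneg _)) (fun m => ?_)
      ((((Real.summable_pow_div_factorial (a*a)).mul_left (a^n * (1+|a|)))).mul_right a)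
    refine le_trans (int_norm_bound ha (hGcont m) (hGbound m)) ?_
    apply le_of_eq
    congr 1
    rw [div_eq_mul_inv, div_eq_mul_inv]
    ring
  have hswap : ∫ y in Set.Ioc 0 a, ((y:ℂ)^n * phiPlus a (y:ℂ))
      = ∑' m, ∫ y in Set.Ioc 0 a, G m y := by
    rw [integral_tsum_of_summable_integral_norm hGint hGsum]
    refine integral_congr_ae (Filter.Eventually.of_forall fun y => ?_)
    exact phi_term_expand a n y
  rw [intervalIntegral.integral_of_le ha.le, hswap]
  have hval : ∀ m, ∫ y in Set.Ioc 0 a, G m y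
      = (cI m - (a:ℂ)*cD m) * ((a:ℂ)^m
        * ((a:ℂ)^(n+m+1) * (n.factorial:ℂ) * (m.factorial:ℂ) / ((n+m+1).factorial:ℂ))) := by
    intro m
    rw [← intervalIntegral.integral_of_le ha.le]
    have hpt : ∀ y ∈ Set.uIcc (0:ℝ) a, G m y
        = (cI m - (a:ℂ)*cD m) * ((a:ℂ)^m * ((y:ℂ)^n * ((a:ℂ)-(y:ℂ))^m)) := by
      intro y _
      rw [hG]
      simp only
      rw [mul_pow]
      ring
    rw [intervalIntegral.integral_congr hpt, intervalIntegral.integral_const_mul,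
      intervalIntegral.integral_const_mul, beta_nat ha n m]
  have hterm : ∀ m, (cI m - (a:ℂ)*cD m) * ((a:ℂ)^m
        * ((a:ℂ)^(n+m+1) * (n.factorial:ℂ) * (m.factorial:ℂ) / ((n+m+1).factorial:ℂ)))
      = (n.factorial:ℂ) * ((a:ℂ)^(2*m+(n+1)) / ((m.factorial:ℂ) * ((m+(n+1)).factorial:ℂ)))
        - (n.factorial:ℂ) * ((a:ℂ)^(2*(m+1)+n)
            / ((((m+1)).factorial:ℂ) * (((m+1)+n).factorial:ℂ))) := by
    intro m
    have e1 : m+(n+1) = n+m+1 := by omega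
    have e2 : (m+1)+n = n+m+1 := by omega
    rw [e1, e2, cI, cD]
    have pow1 : (a:ℂ)^(2*m+(n+1)) = (a:ℂ)^m * (a:ℂ)^(n+m+1) := by
      rw [← pow_add]
      exact congrArg (fun k : ℕ => ((a:ℂ))^k) (by omega)
    have pow2 : (a:ℂ)^(2*(m+1)+n) = (a:ℂ) * ((a:ℂ)^m * (a:ℂ)^(n+m+1)) := by
      rw [← pow_add, ← pow_succ']
      exact congrArg (fun k : ℕ => ((a:ℂ))^k) (by omega)
    rw [pow1, pow2]
    have h1 : ((m.factorial:ℂ)) ≠ 0 := fact_ne m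
    have h2 : (((n+m+1).factorial:ℂ)) ≠ 0 := fact_ne _
    have h4 : (((m+1).factorial:ℂ)) ≠ 0 := fact_ne _
    field_simp
  have hsum1 : Summable (fun m => (n.factorial:ℂ)
      * ((a:ℂ)^(2*m+(n+1)) / ((m.factorial:ℂ) * ((m+(n+1)).factorial:ℂ)))) :=
    (summable_Bc a (n+1)).mul_left _
  have hsum2 : Summable (fun m => (n.factorial:ℂ)
      * ((a:ℂ)^(2*(m+1)+n) / ((((m+1)).factorial:ℂ) * (((m+1)+n).factorial:ℂ)))) := by
    refine Summable.mul_left _ ?_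
    exact (summable_nat_add_iff 1).mpr (summable_Bc a n)
  calc ∑' m, ∫ y in Set.Ioc 0 a, G m y
      = ∑' m, ((n.factorial:ℂ)
          * ((a:ℂ)^(2*m+(n+1)) / ((m.factorial:ℂ) * ((m+(n+1)).factorial:ℂ)))
        - (n.factorial:ℂ) * ((a:ℂ)^(2*(m+1)+n)
            / ((((m+1)).factorial:ℂ) * (((m+1)+n).factorial:ℂ)))) :=
        tsum_congr fun m => by rw [hval m, hterm m]
    _ = (n.factorial:ℂ) * Bc a (n+1)
        - ∑' m, (n.factorial:ℂ) * ((a:ℂ)^(2*(m+1)+n)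
            / ((((m+1)).factorial:ℂ) * (((m+1)+n).factorial:ℂ))) := by
        rw [Summable.tsum_sub hsum1 hsum2, tsum_mul_left, Bc]
    _ = (n.factorial:ℂ) * Bc a (n+1)
        - (n.factorial:ℂ) * (Bc a n - (a:ℂ)^n / (n.factorial:ℂ)) := by
        congr 1
        rw [tsum_mul_left]
        congr 1
        have hzero := Summable.tsum_eq_zero_add (summable_Bc a n)
        have h0 : (a:ℂ)^(2*0+n) / (((0:ℕ).factorial:ℂ) * ((0+n).factorial:ℂ))
            = (a:ℂ)^n / (n.factorial:ℂ) := by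
          norm_num
        rw [h0] at hzero
        rw [Bc, hzero]
        ring
    _ = (n.factorial:ℂ) * (Bc a (n+1) - Bc a n) + (a:ℂ)^n := by
      have h1 : ((n.factorial:ℂ)) ≠ 0 := fact_ne n
      field_simp
      ring

/-! ### Main theorem -/

lemma integrand_expand (a : ℝ) (x : ℂ) (y : ℝ) :
    J0c (x * (y:ℂ)) * phiPlus a (y:ℂ)
      = ∑' n, (cJ n * x^n) * ((y:ℂ)^n * phiPlus a (y:ℂ)) := by
  rw [J0c_eq, ← tsum_mul_right]
  refine tsum_congr fun n => ?_
  rw [mul_pow]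
  ring

theorem phiPlus_integral_equation' (a : ℝ) (ha : 0 < a) (x : ℂ) :
    phiPlus a x + (∫ y in (0:ℝ)..a, J0c (x * (y : ℂ)) * phiPlus a (y : ℂ))
      = J0c ((a : ℂ) * x) := by
  obtain ⟨M, hM⟩ := (isCompact_Icc : IsCompact (Set.Icc (0:ℝ) a)).exists_bound_of_continuousOn
    (continuous_phi_r a).continuousOn
  have hM0 : 0 ≤ M := le_trans (norm_nonneg _) (hM 0 ⟨le_rfl, ha.le⟩)
  set F : ℕ → ℝ → ℂ := fun n y => (cJ n * x^n) * ((y:ℂ)^n * phiPlus a (y:ℂ)) with hF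
  have hFcont : ∀ n, Continuous (F n) := fun n =>
    continuous_const.mul ((Complex.continuous_ofReal.pow n).mul (continuous_phi_r a))
  have hFint : ∀ n, Integrable (F n) (volume.restrict (Set.Ioc 0 a)) :=
    fun n => (hFcont n).integrableOn_Ioc
  have hFbound : ∀ n, ∀ y ∈ Set.Ioc 0 a, ‖F n y‖ ≤ ‖cJ n * x^n‖ * (a^n * M) := by
    intro n y hy
    obtain ⟨hy0, hya⟩ := hy
    have hyn : ‖(y:ℂ)^n‖ ≤ a^n := by
      rw [norm_pow, Complex.norm_real, Real.norm_eq_abs, abs_of_nonneg hy0.le]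
      exact pow_le_pow_left₀ hy0.le hya n
    have hphi : ‖phiPlus a (y:ℂ)‖ ≤ M := hM y ⟨hy0.le, hya⟩
    calc ‖F n y‖ = ‖cJ n * x^n‖ * (‖(y:ℂ)^n‖ * ‖phiPlus a (y:ℂ)‖) := by
          rw [hF]; simp only [norm_mul]
      _ ≤ ‖cJ n * x^n‖ * (a^n * M) := by
          refine mul_le_mul_of_nonneg_left ?_ (norm_nonneg _)
          exact mul_le_mul hyn hphi (norm_nonneg _) (by positivity)
  have hFsum : Summable (fun n => ∫ y in Set.Ioc 0 a, ‖F n y‖) := by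
    refine Summable.of_nonneg_of_le
      (fun n => integral_nonneg (fun y => norm_nonneg _)) (fun n => ?_)
      ((Real.summable_pow_div_factorial (a * ‖x‖)).mul_left (M * a))
    refine le_trans (int_norm_bound ha (hFcont n) (hFbound n)) ?_
    have hcx : ‖cJ n * x^n‖ ≤ ‖x‖^n / (n.factorial:ℝ) := by
      rw [norm_mul, norm_pow, div_eq_mul_inv, mul_comm (‖x‖^n)]
      exact mul_le_mul_of_nonneg_right (hcJ n) (by positivity)
    calc ‖cJ n * x^n‖ * (a^n * M) * a
        ≤ (‖x‖^n / (n.factorial:ℝ)) * (a^n * M) * a :=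
          mul_le_mul_of_nonneg_right
            (mul_le_mul_of_nonneg_right hcx (mul_nonneg (by positivity) hM0)) ha.le
      _ = M * a * ((a*‖x‖)^n / (n.factorial:ℝ)) := by
          rw [mul_pow]
          ring
  have hswap : ∫ y in (0:ℝ)..a, J0c (x * (y:ℂ)) * phiPlus a (y:ℂ)
      = ∑' n, (cJ n * x^n) * ((n.factorial:ℂ) * (Bc a (n+1) - Bc a n) + (a:ℂ)^n) := by
    rw [intervalIntegral.integral_of_le ha.le]
    calc ∫ y in Set.Ioc 0 a, J0c (x * (y:ℂ)) * phiPlus a (y:ℂ)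
        = ∫ y in Set.Ioc 0 a, ∑' n, F n y :=
          integral_congr_ae (Filter.Eventually.of_forall fun y => integrand_expand a x y)
      _ = ∑' n, ∫ y in Set.Ioc 0 a, F n y :=
          (integral_tsum_of_summable_integral_norm hFint hFsum).symm
      _ = ∑' n, (cJ n * x^n) * ((n.factorial:ℂ) * (Bc a (n+1) - Bc a n) + (a:ℂ)^n) := by
          refine tsum_congr fun n => ?_
          rw [← intervalIntegral.integral_of_le ha.le]
          rw [show (fun y : ℝ => F n y)
            = fun y : ℝ => (cJ n * x^n) * ((y:ℂ)^n * phiPlus a (y:ℂ)) from rfl]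
          rw [intervalIntegral.integral_const_mul, moment ha n]
  have hterm : ∀ n : ℕ, (cJ n * x^n) * ((n.factorial:ℂ) * (Bc a (n+1) - Bc a n) + (a:ℂ)^n)
      = (-((-1)^n * x^n / (n.factorial:ℂ) * (Bc a n - Bc a (n+1)))) + cJ n * ((a:ℂ)*x)^n := by
    intro n
    have h1 : ((n.factorial:ℂ)) ≠ 0 := fact_ne n
    rw [cJ, mul_pow]
    field_simp
    ring
  have hrep : Summable (fun n => (-1)^n * x^n / ((n.factorial:ℂ)) * (Bc a n - Bc a (n+1))) := by
    have h0 : Summable (fun n => (-1)^n * x^n / ((n.factorial:ℂ)) * Bc a n) := by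
      simpa using summable_xB a x 0
    exact Summable.congr (h0.sub (summable_xB a x 1)) (fun n => (mul_sub _ _ _).symm)
  have hsplit : ∑' n, (cJ n * x^n) * ((n.factorial:ℂ) * (Bc a (n+1) - Bc a n) + (a:ℂ)^n)
      = (∑' n, -((-1)^n * x^n / (n.factorial:ℂ) * (Bc a n - Bc a (n+1))))
        + ∑' n, cJ n * ((a:ℂ)*x)^n := by
    rw [← Summable.tsum_add hrep.neg (summable_cser hcJ ((a:ℂ)*x))]
    exact tsum_congr hterm
  rw [hswap, hsplit, tsum_neg, ← phiPlus_rep, ← J0c_eq]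
  ring

end PhiAux

theorem phiPlus_integral_equation (a : ℝ) (ha : 0 < a) (x : ℂ) :
    phiPlus a x + (∫ y in (0:ℝ)..a, J0c (x * (y : ℂ)) * phiPlus a (y : ℂ))
      = J0c ((a : ℂ) * x) :=
  phiPlus_integral_equation' a ha x
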